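/- Let q, r be powers of a prime p with p not dividing 3 (i.e. p ≠ 3), r > 1, and let G = C_q ≀ C_r with standard generators x (base generator) and y (top cyclic permutation). Then the two elements x·y·x and x^y · x · x^{y⁻¹} generate G, where x^y = y⁻¹xy. -/

import Mathlib

open Subgroup

/-- Σ(g,h): the union of all conjugates of all (nontrivial-index) powers of g, h and gh. -/
def SigmaSet {G : Type*} [Group G] (g h : G) : Set G :=
  { z | ∃ i : ℕ, 1 ≤ i ∧ i ≤ Nat.card G ∧ ∃ k : G,
      z = k⁻¹ * g ^ i * k ∨ z = k⁻¹ * h ^ i * k ∨ z = k⁻¹ * (g * h) ^ i * k }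

/-- A Beauville group. -/
def IsBeauville (G : Type*) [Group G] : Prop :=
  ∃ x₁ y₁ x₂ y₂ : G, closure {x₁, y₁} = ⊤ ∧ closure {x₂, y₂} = ⊤ ∧
    SigmaSet x₁ y₁ ∩ SigmaSet x₂ y₂ = {1}

/-- A strongly real Beauville group. -/
def IsStronglyRealBeauville (G : Type*) [Group G] : Prop :=
  ∃ x₁ y₁ x₂ y₂ : G, closure {x₁, y₁} = ⊤ ∧ closure {x₂, y₂} = ⊤ ∧
    SigmaSet x₁ y₁ ∩ SigmaSet x₂ y₂ = {1} ∧
    ∃ (φ : MulAut G) (g₁ g₂ : G),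
      g₁ * φ x₁ * g₁⁻¹ = x₁⁻¹ ∧ g₁ * φ y₁ * g₁⁻¹ = y₁⁻¹ ∧
      g₂ * φ x₂ * g₂⁻¹ = x₂⁻¹ ∧ g₂ * φ y₂ * g₂⁻¹ = y₂⁻¹

/-- The shift automorphism of the base group of the wreath product. -/
def shiftAut (q r : ℕ) (c : ZMod r) :
    (ZMod r → Multiplicative (ZMod q)) ≃* (ZMod r → Multiplicative (ZMod q)) where
  toFun f j := f (j - c)
  invFun f j := f (j + c)
  left_inv f := by funext j; simp
  right_inv f := by funext j; simp
  map_mul' f g := rfl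

/-- The action of the top group C_r on the base group (C_q)^r by cyclic shift. -/
def wrAct (q r : ℕ) :
    Multiplicative (ZMod r) →* MulAut (ZMod r → Multiplicative (ZMod q)) where
  toFun c := shiftAut q r c.toAdd
  map_one' := by ext f j; simp [shiftAut]
  map_mul' a b := by ext f j; simp [shiftAut, sub_sub]

/-- The wreath product C_q ≀ C_r = (C_q)^r ⋊ C_r. -/
abbrev Wr (q r : ℕ) : Type :=
  (ZMod r → Multiplicative (ZMod q)) ⋊[wrAct q r] Multiplicative (ZMod r)

/-- The standard base generator x of C_q ≀ C_r (generating one base coordinate). -/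
def wx (q r : ℕ) : Wr q r :=
  SemidirectProduct.inl (Pi.mulSingle 0 (Multiplicative.ofAdd (1 : ZMod q)))

/-- The standard top generator y of C_q ≀ C_r (cyclically permuting the coordinates). -/
def wy (q r : ℕ) : Wr q r := SemidirectProduct.inr (Multiplicative.ofAdd (1 : ZMod r))



open Subgroup Polynomial

section AuxStmt8

variable {p a b q r : ℕ}

/-- The shift operator on `ZMod r → ZMod q`. -/
noncomputable def shiftT (q r : ℕ) : Module.End (ZMod q) (ZMod r → ZMod q) :=
  LinearMap.funLeft (ZMod q) (ZMod q) (fun j => j + 1)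

/-- The convolution-with-(1,1,1) operator. -/
noncomputable def opM (q r : ℕ) : Module.End (ZMod q) (ZMod r → ZMod q) :=
  LinearMap.funLeft (ZMod q) (ZMod q) (fun j => j - 1) + 1 + shiftT q r

lemma opM_apply (w : ZMod r → ZMod q) (j : ZMod r) :
    opM q r w j = w (j - 1) + w j + w (j + 1) := rfl

lemma shiftT_pow (k : ℕ) (w : ZMod r → ZMod q) (j : ZMod r) :
    (shiftT q r ^ k) w j = w (j + k) := by
  induction k generalizing w with
  | zero => simp
  | succ n ih =>
    rw [pow_succ]
    have h1 : (shiftT q r ^ n * shiftT q r) w j = (shiftT q r ^ n) (shiftT q r w) j := rfl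
    rw [h1, ih]
    show w (j + n + 1) = w (j + (n + 1 : ℕ))
    congr 1
    push_cast
    ring

lemma shiftT_pow_card (hq' : 0 < r) : shiftT q r ^ r = 1 := by
  ext w j
  rw [shiftT_pow, Module.End.one_apply, ZMod.natCast_self, add_zero]

lemma poly_key (hp : p.Prime) (hq : q = p ^ a) (hr : r = p ^ b) (ha : a ≠ 0) :
    ∃ g : Polynomial (ZMod q),
      (X - 1 : Polynomial (ZMod q)) ^ r = X ^ r - 1 + C (p : ZMod q) * g := by
  haveI := Fact.mk hp
  haveI : NeZero q := ⟨hq ▸ pow_ne_zero a hp.pos.ne'⟩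
  have hdvd : p ∣ q := hq ▸ dvd_pow_self p ha
  set P : Polynomial (ZMod q) := (X - 1) ^ r - (X ^ r - 1) with hP
  have hmap : P.map (ZMod.castHom hdvd (ZMod p)) = 0 := by
    have hfrob : ((X : Polynomial (ZMod p)) - 1) ^ r = X ^ r - 1 := by
      rw [hr]
      have := sub_pow_char_pow (p := p) (X : Polynomial (ZMod p)) 1 b
      rwa [one_pow] at this
    simp [hP, Polynomial.map_sub, Polynomial.map_pow, Polynomial.map_one, hfrob]
  have hco : ∀ i, (p : ZMod q) ∣ P.coeff i := by
    intro i
    have h0 : (ZMod.castHom hdvd (ZMod p)) (P.coeff i) = 0 := by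
      have := congrArg (fun Q => Polynomial.coeff Q i) hmap
      simpa [Polynomial.coeff_map] using this
    set x := P.coeff i with hx
    have hxv : ((x.val : ℕ) : ZMod p) = 0 := by
      rwa [ZMod.castHom_apply, ← ZMod.natCast_val] at h0
    have hdv : p ∣ x.val := (ZMod.natCast_eq_zero_iff _ _).mp hxv
    obtain ⟨c, hc⟩ := hdv
    refine ⟨(c : ZMod q), ?_⟩
    have hxx : ((x.val : ℕ) : ZMod q) = x := ZMod.natCast_zmod_val x
    rw [← hxx, hc]
    push_cast
    ring
  obtain ⟨g, hg⟩ := (Polynomial.C_dvd_iff_dvd_coeff _ _).mpr hco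
  exact ⟨g, by rw [← hg, hP]; ring⟩

lemma nilp_shift (hp : p.Prime) (hq : q = p ^ a) (hr : r = p ^ b) :
    IsNilpotent (shiftT q r - 1) := by
  rcases Nat.eq_zero_or_pos a with ha | ha
  · have hq1 : q = 1 := by rw [hq, ha, pow_zero]
    subst hq1
    exact ⟨1, by ext w j; exact Subsingleton.elim _ _⟩
  · obtain ⟨g, hg⟩ := poly_key hp hq hr ha.ne'
    have hT := congrArg (aeval (shiftT q r)) hg
    simp only [map_pow, map_sub, map_add, map_one, aeval_X, map_mul, aeval_C] at hT
    have hTr : shiftT q r ^ r = 1 := shiftT_pow_card (hr ▸ pow_pos hp.pos b)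
    rw [hTr, sub_self, zero_add] at hT
    refine ⟨r * a, ?_⟩
    have hcomm : Commute (algebraMap (ZMod q) (Module.End (ZMod q) (ZMod r → ZMod q)) (p : ZMod q))
        (aeval (shiftT q r) g) := (Algebra.commutes _ _)
    rw [pow_mul, hT, hcomm.mul_pow, ← map_pow]
    have hp0 : ((p : ZMod q)) ^ a = 0 := by
      rw [← Nat.cast_pow, ← hq, ZMod.natCast_self]
    rw [hp0, map_zero, zero_mul]

lemma opM_surj (hp : p.Prime) (hp3 : p ≠ 3) (hq : q = p ^ a) (hr : r = p ^ b) :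
    Function.Surjective (opM q r) := by
  have hr1 : 1 ≤ r := hr ▸ Nat.one_le_pow b p hp.pos
  have hTr : shiftT q r ^ r = 1 := shiftT_pow_card hr1
  have hTu : IsUnit (shiftT q r) := by
    have h1 : shiftT q r * shiftT q r ^ (r - 1) = 1 := by
      rw [← pow_succ', Nat.sub_add_cancel hr1, hTr]
    have h2 : shiftT q r ^ (r - 1) * shiftT q r = 1 := by
      rw [← pow_succ, Nat.sub_add_cancel hr1, hTr]
    exact ⟨⟨_, _, h1, h2⟩, rfl⟩
  -- opM * T = T^2 + T + 1
  have hMT : opM q r * shiftT q r = shiftT q r ^ 2 + shiftT q r + 1 := by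
    refine LinearMap.ext fun w => funext fun j => ?_
    have hLHS : (opM q r * shiftT q r) w j = w (j - 1 + 1) + w (j + 1) + w (j + 1 + 1) := rfl
    have hRHS : ((shiftT q r ^ 2 + shiftT q r + 1 : Module.End (ZMod q) (ZMod r → ZMod q))) w j
        = w (j + 1 + 1) + w (j + 1) + w j := by
      have h2 : (shiftT q r ^ 2) w j = w (j + 1 + 1) := rfl
      simp only [LinearMap.add_apply, Module.End.one_apply, Pi.add_apply, h2]
      rfl
    rw [hLHS, hRHS, sub_add_cancel]
    ring
  have hdecomp : shiftT q r ^ 2 + shiftT q r + 1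
      = (shiftT q r - 1) ^ 2 + (3 : ZMod q) • shiftT q r := by
    have h3 : (3 : ZMod q) • shiftT q r = shiftT q r + shiftT q r + shiftT q r := by
      rw [show (3 : ZMod q) = 1 + 1 + 1 by norm_num, add_smul, add_smul, one_smul]
    rw [h3, sq, sq, mul_sub, sub_mul, sub_mul, mul_one, one_mul]
    abel
  have hnil : IsNilpotent ((shiftT q r - 1) ^ 2) := by
    obtain ⟨n, hn⟩ := nilp_shift hp hq hr
    exact ⟨n, by rw [← pow_mul, Nat.mul_comm, pow_mul, hn, zero_pow (two_ne_zero)]⟩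
  have h3u : IsUnit (3 : ZMod q) := by
    rw [show (3 : ZMod q) = ((3 : ℕ) : ZMod q) by norm_num, ZMod.isUnit_iff_coprime]
    rw [hq]
    exact Nat.Coprime.pow_right a ((Nat.coprime_primes (by norm_num) hp).mpr (Ne.symm hp3))
  have h3Tu : IsUnit ((3 : ZMod q) • shiftT q r) := by
    rw [Algebra.smul_def]
    exact (h3u.map (algebraMap (ZMod q) (Module.End (ZMod q) (ZMod r → ZMod q)))).mul hTu
  have hcomm : Commute ((shiftT q r - 1) ^ 2) ((3 : ZMod q) • shiftT q r) :=
    (((Commute.refl (shiftT q r)).sub_left (Commute.one_left _)).pow_left 2).smul_right _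
  have hsum : IsUnit ((shiftT q r - 1) ^ 2 + (3 : ZMod q) • shiftT q r) :=
    hnil.isUnit_add_right_of_commute h3Tu hcomm
  have hMTu : IsUnit (opM q r * shiftT q r) := by rw [hMT, hdecomp]; exact hsum
  have hMu : IsUnit (opM q r) := by
    have hM : opM q r = (opM q r * shiftT q r) * shiftT q r ^ (r - 1) := by
      rw [mul_assoc, ← pow_succ', Nat.sub_add_cancel hr1, hTr, mul_one]
    rw [hM]
    exact hMTu.mul (hTu.pow _)
  exact ((Module.End.isUnit_iff _).mp hMu).surjective

lemma key_sum [NeZero r] (w : ZMod r → ZMod q) (j : ZMod r) :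
    ∑ c : ZMod r, w c * ((if j - c + 1 = 0 then (1 : ZMod q) else 0)
        + (if j - c = 0 then (1 : ZMod q) else 0)
        + (if j - c - 1 = 0 then (1 : ZMod q) else 0))
      = w (j - 1) + w j + w (j + 1) := by
  have h : ∀ t : ZMod r,
      ∑ c : ZMod r, w c * (if j - c + t = 0 then (1 : ZMod q) else 0) = w (j + t) := by
    intro t
    have hiff : ∀ c : ZMod r, (j - c + t = 0) = (c = j + t) := by
      intro c
      apply propext
      constructor
      · intro h; linear_combination -h
      · intro h; rw [h]; ring
    simp_rw [mul_ite, mul_one, mul_zero, hiff]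
    rw [Finset.sum_ite_eq' Finset.univ (j + t) w, if_pos (Finset.mem_univ _)]
  have e2 : ∀ c : ZMod r, ((j - c = 0)) = ((j - c + 0 = 0)) := by
    intro c; rw [add_zero]
  have e3 : ∀ c : ZMod r, ((j - c - 1 = 0)) = ((j - c + (-1) = 0)) := by
    intro c; rw [sub_eq_add_neg]
  simp_rw [mul_add, Finset.sum_add_distrib, e2, e3, h]
  rw [add_zero, ← sub_eq_add_neg]
  ring

end AuxStmt8

lemma wrAct_apply (q r : ℕ) (g : Multiplicative (ZMod r)) (f : ZMod r → Multiplicative (ZMod q)) (j : ZMod r) :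
    wrAct q r g f j = f (j - g.toAdd) := rfl

lemma conj_inl (q r : ℕ) (z : Wr q r) (f : ZMod r → Multiplicative (ZMod q)) :
    z * SemidirectProduct.inl f * z⁻¹ = SemidirectProduct.inl (wrAct q r z.right f) := by
  have hz : z = SemidirectProduct.inl z.left * SemidirectProduct.inr z.right :=
    (SemidirectProduct.inl_left_mul_inr_right z).symm
  have h1 : (SemidirectProduct.inr z.right : Wr q r) * SemidirectProduct.inl f
      * (SemidirectProduct.inr z.right)⁻¹ = SemidirectProduct.inl (wrAct q r z.right f) := by
    rw [← map_inv, ← SemidirectProduct.inl_aut]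
  calc z * SemidirectProduct.inl f * z⁻¹
      = SemidirectProduct.inl z.left
        * (SemidirectProduct.inr z.right * SemidirectProduct.inl f
            * (SemidirectProduct.inr z.right)⁻¹)
        * (SemidirectProduct.inl z.left)⁻¹ := by
        conv_lhs => rw [hz]
        group
    _ = SemidirectProduct.inl (z.left * wrAct q r z.right f * z.left⁻¹) := by
        rw [h1, ← map_inv, ← map_mul, ← map_mul]
    _ = SemidirectProduct.inl (wrAct q r z.right f) := by
        rw [mul_comm z.left, mul_inv_cancel_right]

/-- for q, r powers of a prime p ≠ 3 with r > 1, the elements x·y·x and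
x^y·x·x^{y⁻¹} generate C_q ≀ C_r (here x^g = g⁻¹xg). -/
theorem stmt8 (p a b : ℕ) (hp : p.Prime) (hp3 : p ≠ 3) (q r : ℕ)
    (hq : q = p ^ a) (hr : r = p ^ b) (hb : 1 ≤ b) :
    closure {wx q r * wy q r * wx q r,
      ((wy q r)⁻¹ * wx q r * wy q r) * wx q r * (wy q r * wx q r * (wy q r)⁻¹)} = ⊤ := by
  haveI : NeZero q := ⟨hq ▸ pow_ne_zero a hp.pos.ne'⟩
  haveI : NeZero r := ⟨hr ▸ pow_ne_zero b hp.pos.ne'⟩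
  set u := wx q r * wy q r * wx q r with hu
  set v := ((wy q r)⁻¹ * wx q r * wy q r) * wx q r * (wy q r * wx q r * (wy q r)⁻¹) with hv
  set K := closure {u, v} with hK
  have hus : u ∈ K := subset_closure (Set.mem_insert _ _)
  have hvs : v ∈ K := subset_closure (Set.mem_insert_of_mem _ rfl)
  set e : ZMod r → Multiplicative (ZMod q) :=
    Pi.mulSingle 0 (Multiplicative.ofAdd (1 : ZMod q)) with he
  set F : ZMod r → Multiplicative (ZMod q) :=
    wrAct q r (Multiplicative.ofAdd (1 : ZMod r))⁻¹ e * e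
      * wrAct q r (Multiplicative.ofAdd (1 : ZMod r)) e with hF
  have hv1 : (wy q r)⁻¹ * wx q r * wy q r
      = SemidirectProduct.inl (wrAct q r (Multiplicative.ofAdd (1 : ZMod r))⁻¹ e) := by
    rw [map_inv (wrAct q r), wx, wy, ← map_inv SemidirectProduct.inr]
    exact (SemidirectProduct.inl_aut_inv _ _).symm
  have hv2 : wy q r * wx q r * (wy q r)⁻¹
      = SemidirectProduct.inl (wrAct q r (Multiplicative.ofAdd (1 : ZMod r)) e) := by
    rw [wx, wy, ← map_inv SemidirectProduct.inr]
    exact (SemidirectProduct.inl_aut _ _).symm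
  have hv_eq : v = SemidirectProduct.inl F := by
    rw [hv, hv1, hv2, wx, ← map_mul, ← map_mul, hF]
  have hur : u.right = Multiplicative.ofAdd (1 : ZMod r) := by
    rw [hu, SemidirectProduct.mul_right, SemidirectProduct.mul_right, wx, wy,
      SemidirectProduct.right_inl, SemidirectProduct.right_inr, one_mul, mul_one]
  have hconj : ∀ c : ZMod r,
      SemidirectProduct.inl (wrAct q r (Multiplicative.ofAdd c) F) ∈ K := by
    intro c
    have hmem : u ^ c.val * v * (u ^ c.val)⁻¹ ∈ K :=
      mul_mem (mul_mem (pow_mem hus c.val) hvs) (inv_mem (pow_mem hus c.val))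
    rw [hv_eq, conj_inl] at hmem
    have hright : (u ^ c.val).right = Multiplicative.ofAdd c := by
      have h2 : (u ^ c.val).right = u.right ^ c.val := by
        rw [← SemidirectProduct.rightHom_eq_right, map_pow]
      rw [h2, hur, ← ofAdd_nsmul]
      congr 1
      rw [nsmul_eq_mul, mul_one, ZMod.natCast_zmod_val]
    rw [hright] at hmem
    exact hmem
  have hFval : ∀ m : ZMod r, Multiplicative.toAdd (F m)
      = (if m + 1 = 0 then (1 : ZMod q) else 0) + (if m = 0 then (1 : ZMod q) else 0)
        + (if m - 1 = 0 then (1 : ZMod q) else 0) := by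
    intro m
    rw [hF, Pi.mul_apply, Pi.mul_apply, ← ofAdd_neg, wrAct_apply, wrAct_apply,
      toAdd_mul, toAdd_mul, he]
    simp [Pi.mulSingle_apply, apply_ite Multiplicative.toAdd, sub_neg_eq_add]
  have hall : ∀ f : ZMod r → Multiplicative (ZMod q), SemidirectProduct.inl f ∈ K := by
    intro f
    obtain ⟨w, hw⟩ := opM_surj hp hp3 hq hr (fun j => Multiplicative.toAdd (f j))
    have key : f = ∏ c : ZMod r,
        (wrAct q r (Multiplicative.ofAdd c) F) ^ (w c).val := by
      funext j
      apply Multiplicative.toAdd.injective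
      have happ : (∏ c : ZMod r, (wrAct q r (Multiplicative.ofAdd c) F) ^ (w c).val) j
          = ∏ c : ZMod r, ((wrAct q r (Multiplicative.ofAdd c) F) j) ^ (w c).val := by
        rw [Finset.prod_apply]
        simp only [Pi.pow_apply]
      rw [happ, toAdd_prod]
      have hterm : ∀ c : ZMod r,
          Multiplicative.toAdd (((wrAct q r (Multiplicative.ofAdd c) F) j) ^ (w c).val)
          = w c * ((if j - c + 1 = 0 then (1 : ZMod q) else 0)
              + (if j - c = 0 then (1 : ZMod q) else 0)
              + (if j - c - 1 = 0 then (1 : ZMod q) else 0)) := by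
        intro c
        rw [wrAct_apply, toAdd_pow, toAdd_ofAdd, hFval, nsmul_eq_mul, ZMod.natCast_zmod_val]
      rw [Finset.sum_congr rfl fun c _ => hterm c, key_sum w j]
      have hwj := congrFun hw j
      rw [opM_apply] at hwj
      exact hwj.symm
    rw [key]
    exact Finset.prod_induction _ (fun x => SemidirectProduct.inl x ∈ K)
      (fun x y hx hy => by rw [map_mul]; exact mul_mem hx hy)
      (by rw [map_one]; exact one_mem K)
      (fun c _ => by rw [map_pow]; exact pow_mem (hconj c) _)
  have hyK : wy q r ∈ K := by
    have h1 : SemidirectProduct.inl u.left * SemidirectProduct.inr u.right = u :=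
      SemidirectProduct.inl_left_mul_inr_right u
    have h2 : wy q r = (SemidirectProduct.inl u.left)⁻¹ * u := by
      rw [wy, ← hur, eq_inv_mul_iff_mul_eq]
      exact h1
    rw [h2]
    exact mul_mem (inv_mem (hall _)) hus
  refine (Subgroup.eq_top_iff' K).mpr fun z => ?_
  have hz : z = SemidirectProduct.inl z.left * SemidirectProduct.inr z.right :=
    (SemidirectProduct.inl_left_mul_inr_right z).symm
  rw [hz]
  refine mul_mem (hall _) ?_
  have hzr : SemidirectProduct.inr z.right = wy q r ^ (Multiplicative.toAdd z.right).val := by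
    rw [wy, ← map_pow]
    congr 1
    rw [← ofAdd_nsmul, nsmul_eq_mul, mul_one, ZMod.natCast_zmod_val]
    rfl
  rw [hzr]
  exact pow_mem hyK _
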